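/- If z0 ∈ (0,1) then V*_𝒰(z0) = [z0, 1), and if z0 ∈ (−1,0) then V*_𝒰(z0) = (−1, z0]. -/

import Mathlib

open Complex Set Filter Topology

noncomputable section

/-- The open unit disc. -/
def uDisc : Set ℂ := {z : ℂ | ‖z‖ < 1}

/-- The holomorphic branch of the square root with `√1 = 1` (principal branch). -/
def csqrt (z : ℂ) : ℂ := z ^ (1/2 : ℂ)

/-- `f` has only real Taylor coefficients at `0`, expressed by the symmetry
`f(conj z) = conj (f z)` on the unit disc. -/
def RealCoeffs (f : ℂ → ℂ) : Prop :=
  ∀ z ∈ uDisc, f ((starRingEnd ℂ) z) = (starRingEnd ℂ) (f z)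

/-- The class `𝒰` of univalent self-maps of the unit disc with `f(0) = 0`,
`f'(0) > 0` and real Taylor coefficients. -/
def ClassU (f : ℂ → ℂ) : Prop :=
  DifferentiableOn ℂ f uDisc ∧ InjOn f uDisc ∧ MapsTo f uDisc uDisc ∧
    f 0 = 0 ∧ 0 < (deriv f 0).re ∧ (deriv f 0).im = 0 ∧ RealCoeffs f

/-- The value range `V_𝒰(z0)`. -/
def VU (z0 : ℂ) : Set ℂ := {w : ℂ | ∃ f : ℂ → ℂ, ClassU f ∧ f z0 = w}

/-- The value range for inverse functions `V*_𝒰(z0)`. -/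
def VUstar (z0 : ℂ) : Set ℂ :=
  {w : ℂ | w ∈ uDisc ∧ ∃ f : ℂ → ℂ, ClassU f ∧ f w = z0}

lemma uDisc_eq_ball : uDisc = Metric.ball (0 : ℂ) 1 := by
  ext z; simp [uDisc, Metric.mem_ball, Complex.dist_eq]

lemma isOpen_uDisc : IsOpen uDisc := uDisc_eq_ball ▸ Metric.isOpen_ball

lemma zero_mem_uDisc : (0 : ℂ) ∈ uDisc := by simp [uDisc]

lemma ofReal_mem_uDisc {x : ℝ} (hx : |x| < 1) : (x : ℂ) ∈ uDisc := by
  simpa [uDisc] using hx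

/-- f is real on the real axis. -/
lemma im_eq_zero {f : ℂ → ℂ} (hf : ClassU f) {x : ℝ} (hx : |x| < 1) :
    (f x).im = 0 := by
  have h := hf.2.2.2.2.2.2 (x : ℂ) (ofReal_mem_uDisc hx)
  rw [Complex.conj_ofReal] at h
  have := Complex.conj_eq_iff_im.1 h.symm
  exact this

lemma linear_classU {c : ℝ} (hc0 : 0 < c) (hc1 : c ≤ 1) :
    ClassU (fun z => (c : ℂ) * z) := by
  have hcne : (c : ℂ) ≠ 0 := by exact_mod_cast hc0.ne'
  have hderiv : HasDerivAt (fun z : ℂ => (c : ℂ) * z) (c : ℂ) 0 := by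
    simpa using (hasDerivAt_id (0 : ℂ)).const_mul (c : ℂ)
  refine ⟨(differentiable_id.const_mul _).differentiableOn,
    fun a _ b _ h => mul_left_cancel₀ hcne h,
    fun z hz => ?_, mul_zero _, ?_, ?_, fun z _ => ?_⟩
  · simp only [uDisc, mem_setOf_eq, map_mul, norm_mul, Complex.norm_real, Real.norm_eq_abs] at *
    calc |c| * ‖z‖ ≤ 1 * ‖z‖ := by
          apply mul_le_mul_of_nonneg_right _ (norm_nonneg z)
          rwa [abs_of_pos hc0]
      _ < 1 := by simpa using hz
  · rw [hderiv.deriv]; simpa using hc0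
  · rw [hderiv.deriv]; simp
  · simp [map_mul, Complex.conj_ofReal]

/-- If `f ∈ ClassU` then `f` is positive on `(0,1)` and negative on `(-1,0)`. -/
lemma sign_of_classU {f : ℂ → ℂ} (hf : ClassU f) :
    (∀ x : ℝ, 0 < x → x < 1 → 0 < (f x).re) ∧
    (∀ x : ℝ, -1 < x → x < 0 → (f x).re < 0) := by
  set g : ℝ → ℝ := fun t => (f t).re with hg
  have hg0 : g 0 = 0 := by simp [hg, hf.2.2.2.1]
  -- g vanishes only at 0 on (-1,1)
  have hzero : ∀ s : ℝ, |s| < 1 → g s = 0 → s = 0 := by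
    intro s hs hgs
    have hfs : f s = 0 := by
      apply Complex.ext
      · simpa [hg] using hgs
      · simpa using im_eq_zero hf hs
    have := hf.2.1 (ofReal_mem_uDisc hs) zero_mem_uDisc (by
      rw [hfs]; simp [hf.2.2.2.1])
    exact_mod_cast this
  -- continuity of g on compact subintervals
  have hgc : ∀ a b : ℝ, -1 < a → b < 1 → ContinuousOn g (Icc a b) := by
    intro a b ha hb
    apply Complex.continuous_re.comp_continuousOn
    apply (hf.1.continuousOn).comp Complex.continuous_ofReal.continuousOn
    intro t ht
    apply ofReal_mem_uDisc
    rw [abs_lt]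
    exact ⟨lt_of_lt_of_le ha ht.1, lt_of_le_of_lt ht.2 hb⟩
  -- derivative of g at 0 is positive
  have hfd : HasDerivAt f (deriv f 0) 0 :=
    (hf.1.differentiableAt (isOpen_uDisc.mem_nhds zero_mem_uDisc)).hasDerivAt
  have hgd : HasDerivAt g ((deriv f 0).re) 0 := by
    have : HasDerivAt f (deriv f 0) ((0 : ℝ) : ℂ) := by simpa using hfd
    exact this.real_of_complex
  have hdpos : 0 < (deriv f 0).re := hf.2.2.2.2.1
  have hslope := hasDerivAt_iff_tendsto_slope.1 hgd
  constructor
  · intro x hx0 hx1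
    by_contra hle
    push_neg at hle
    have hne : g x ≠ 0 := fun h => hx0.ne' (hzero x (by rw [abs_of_pos hx0]; exact hx1) h)
    have hgx : g x < 0 := lt_of_le_of_ne hle hne
    -- find t ∈ (0, x) with g t > 0
    have hsl : Tendsto (slope g 0) (𝓝[>] (0:ℝ)) (𝓝 ((deriv f 0).re)) :=
      hslope.mono_left (nhdsWithin_mono _ (fun t ht => ne_of_gt ht))
    have hev : ∀ᶠ t in 𝓝[>] (0:ℝ), 0 < slope g 0 t ∧ t < x ∧ 0 < t :=
      ((hsl.eventually (lt_mem_nhds hdpos)).and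
        ((eventually_nhdsWithin_of_eventually_nhds (Filter.Tendsto.eventually_lt_const hx0 tendsto_id)).and
          self_mem_nhdsWithin))
    obtain ⟨t, hts, htx, ht0⟩ := hev.exists
    have hgt : 0 < g t := by
      have : slope g 0 t = g t / t := by simp [slope_def_field, hg0]
      rw [this] at hts
      exact (div_pos_iff.1 hts).resolve_right (fun h => absurd h.2 (not_lt.2 ht0.le)) |>.1
    -- IVT on [t, x]
    have hsub : Icc t x ⊆ Icc (0:ℝ) x := Icc_subset_Icc ht0.le le_rfl
    have hc : ContinuousOn g (Icc t x) :=
      (hgc 0 x (by linarith) hx1).mono hsub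
    obtain ⟨s, hs, hgs⟩ := intermediate_value_Ioo' htx.le hc ⟨hgx, hgt⟩
    have hs0 : s = 0 := hzero s (by rw [abs_lt]; constructor <;> [linarith [hs.1]; linarith [hs.2]]) hgs
    linarith [hs.1, hs0 ▸ ht0]
  · intro x hx1 hx0
    by_contra hle
    push_neg at hle
    have habs : |x| < 1 := by rw [abs_lt]; exact ⟨hx1, by linarith⟩
    have hne : g x ≠ 0 := fun h => absurd (hzero x habs h) hx0.ne
    have hgx : 0 < g x := lt_of_le_of_ne hle (Ne.symm hne)
    -- find t ∈ (x, 0) with g t < 0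
    have hsl : Tendsto (slope g 0) (𝓝[<] (0:ℝ)) (𝓝 ((deriv f 0).re)) :=
      hslope.mono_left (nhdsWithin_mono _ (fun t ht => ne_of_lt ht))
    have hev : ∀ᶠ t in 𝓝[<] (0:ℝ), 0 < slope g 0 t ∧ x < t ∧ t < 0 :=
      ((hsl.eventually (lt_mem_nhds hdpos)).and
        ((eventually_nhdsWithin_of_eventually_nhds (Filter.Tendsto.eventually_const_lt hx0 tendsto_id)).and
          self_mem_nhdsWithin))
    obtain ⟨t, hts, htx, ht0⟩ := hev.exists
    have hgt : g t < 0 := by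
      have : slope g 0 t = g t / t := by simp [slope_def_field, hg0]
      rw [this] at hts
      rcases div_pos_iff.1 hts with ⟨h, h'⟩ | ⟨h, h'⟩
      · linarith
      · linarith
    -- IVT on [x, t]
    have hc : ContinuousOn g (Icc x t) :=
      (hgc x 0 hx1 (by linarith)).mono (Icc_subset_Icc le_rfl ht0.le)
    obtain ⟨s, hs, hgs⟩ := intermediate_value_Ioo' htx.le hc ⟨hgt, hgx⟩
    have hs0 : s = 0 := hzero s (by rw [abs_lt]; constructor <;> [linarith [hs.1]; linarith [hs.2]]) hgs
    linarith [hs.2, hs0 ▸ ht0]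

/-- Hard direction: if f w = z0 with f ∈ ClassU then w is real with |z0| ≤ |w|
and w has the same sign as z0. -/
lemma hard_dir {z0 : ℝ} (h0 : z0 ≠ 0) {w : ℂ} (hwD : w ∈ uDisc)
    {f : ℂ → ℂ} (hf : ClassU f) (hfw : f w = (z0 : ℂ)) :
    ∃ x : ℝ, w = (x : ℂ) ∧ |x| < 1 ∧ |z0| ≤ |x| ∧ (0 < z0 → 0 < x) ∧ (z0 < 0 → x < 0) := by
  have hwc : (starRingEnd ℂ) w = w := by
    apply hf.2.1 (show (starRingEnd ℂ) w ∈ uDisc by simpa [uDisc] using hwD) hwD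
    rw [hf.2.2.2.2.2.2 w hwD, hfw, Complex.conj_ofReal]
  have him : w.im = 0 := Complex.conj_eq_iff_im.1 hwc
  set x := w.re with hx
  have hwx : w = (x : ℂ) := Complex.ext rfl (by simp [him])
  have habs : |x| < 1 := by
    rw [← Real.norm_eq_abs, ← Complex.norm_real, ← hwx]; exact hwD
  have hxz : (f (x : ℂ)).re = z0 := by rw [← hwx, hfw, Complex.ofReal_re]
  have hxne : x ≠ 0 := by
    intro h
    apply h0
    rw [← hxz, h, Complex.ofReal_zero, hf.2.2.2.1, Complex.zero_re]
  -- Schwarz lemma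
  have hsch : ‖f w‖ ≤ ‖w‖ := by
    rw [uDisc_eq_ball] at hwD
    exact Complex.norm_le_norm_of_mapsTo_ball (uDisc_eq_ball ▸ hf.1)
      ((uDisc_eq_ball ▸ hf.2.2.1 : MapsTo f (Metric.ball 0 1) (Metric.ball 0 1)).mono_right
        Metric.ball_subset_closedBall) hf.2.2.2.1 (by simpa [Complex.dist_eq] using hwD)
  have hineq : |z0| ≤ |x| := by
    rw [hfw] at hsch
    rw [hwx] at hsch
    simpa [Complex.norm_real] using hsch
  refine ⟨x, hwx, habs, hineq, ?_, ?_⟩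
  · intro hz0
    rcases lt_trichotomy x 0 with h | h | h
    · exfalso
      have := (sign_of_classU hf).2 x (by linarith [(abs_lt.1 habs).1]) h
      linarith [hxz ▸ this]
    · exact absurd h hxne
    · exact h
  · intro hz0
    rcases lt_trichotomy x 0 with h | h | h
    · exact h
    · exact absurd h hxne
    · exfalso
      have := (sign_of_classU hf).1 x h (by linarith [(abs_lt.1 habs).2])
      linarith [hxz ▸ this]

theorem valueRange_inv_ClassU_real (z0 : ℝ) (h1 : -1 < z0) (h2 : z0 < 1) (h0 : z0 ≠ 0) :
    (0 < z0 → VUstar (z0 : ℂ) = Complex.ofReal '' Ico z0 1) ∧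
    (z0 < 0 → VUstar (z0 : ℂ) = Complex.ofReal '' Ioc (-1) z0) := by
  constructor
  · intro hz0
    ext w
    simp only [VUstar, mem_setOf_eq, mem_image]
    constructor
    · rintro ⟨hwD, f, hf, hfw⟩
      obtain ⟨x, hwx, habs, hineq, hpos, -⟩ := hard_dir h0 hwD hf hfw
      have hxpos : 0 < x := hpos hz0
      refine ⟨x, ⟨?_, ?_⟩, hwx.symm⟩
      · calc z0 = |z0| := (abs_of_pos hz0).symm
          _ ≤ |x| := hineq
          _ = x := abs_of_pos hxpos
      · exact (abs_lt.1 habs).2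
    · rintro ⟨x, ⟨hx1, hx2⟩, rfl⟩
      have hxpos : 0 < x := lt_of_lt_of_le hz0 hx1
      refine ⟨ofReal_mem_uDisc (by rw [abs_of_pos hxpos]; exact hx2),
        fun z => ((z0 / x : ℝ) : ℂ) * z,
        linear_classU (div_pos hz0 hxpos) ((div_le_one hxpos).2 hx1), ?_⟩
      show ((z0 / x : ℝ) : ℂ) * (x : ℂ) = (z0 : ℂ)
      rw [← Complex.ofReal_mul, div_mul_cancel₀ _ hxpos.ne']
  · intro hz0
    ext w
    simp only [VUstar, mem_setOf_eq, mem_image]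
    constructor
    · rintro ⟨hwD, f, hf, hfw⟩
      obtain ⟨x, hwx, habs, hineq, -, hneg⟩ := hard_dir h0 hwD hf hfw
      have hxneg : x < 0 := hneg hz0
      refine ⟨x, ⟨(abs_lt.1 habs).1, ?_⟩, hwx.symm⟩
      rw [abs_of_neg hz0, abs_of_neg hxneg] at hineq
      linarith
    · rintro ⟨x, ⟨hx1, hx2⟩, rfl⟩
      have hxneg : x < 0 := lt_of_le_of_lt hx2 hz0
      have hc0 : 0 < z0 / x := div_pos_of_neg_of_neg hz0 hxneg
      have hc1 : z0 / x ≤ 1 := by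
        rw [div_le_one_iff]
        right; right; exact ⟨hxneg, hx2⟩
      refine ⟨ofReal_mem_uDisc (by rw [abs_of_neg hxneg]; linarith),
        fun z => ((z0 / x : ℝ) : ℂ) * z, linear_classU hc0 hc1, ?_⟩
      show ((z0 / x : ℝ) : ℂ) * (x : ℂ) = (z0 : ℂ)
      rw [← Complex.ofReal_mul, div_mul_cancel₀ _ hxneg.ne]
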